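/- For every α ∈ ℕⁿ, E(D(α)) ⊆ D(E(α)); that is, if β ∈ D(α) and γ ∈ E(β), then there exists δ ∈ E(α) with γ ∈ D(δ). -/

import Mathlib

/-- The set of elementary shuffles `σ_{ij} = e_i - e_j ∈ ℤⁿ`, for `i ≤ j`. -/
def elementaryShuffles (n : ℕ) : Set (Fin n → ℤ) :=
  {v | ∃ i j : Fin n, i ≤ j ∧ v = Pi.single i (1 : ℤ) - Pi.single j (1 : ℤ)}

/-- The set `S_n ⊆ ℤⁿ` of shuffles: finite sums of elementary shuffles (including `0`). -/
def shuffles (n : ℕ) : Set (Fin n → ℤ) :=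
  (AddSubmonoid.closure (elementaryShuffles n) : AddSubmonoid (Fin n → ℤ))

/-- The inclusion `ℕⁿ ⊆ ℤⁿ`. -/
def natToInt {n : ℕ} (α : Fin n → ℕ) : Fin n → ℤ := fun i => (α i : ℤ)

/-- `D(α) = α + ℕⁿ`. -/
def Dpt {n : ℕ} (α : Fin n → ℕ) : Set (Fin n → ℕ) := {β | ∃ γ : Fin n → ℕ, β = α + γ}

/-- `E(α) = (α + S_n) ∩ ℕⁿ`. -/
def Ept {n : ℕ} (α : Fin n → ℕ) : Set (Fin n → ℕ) :=
  {β | ∃ s ∈ shuffles n, natToInt β = natToInt α + s}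

/-- `D(X) = ⋃_{α ∈ X} D(α)`. -/
def Dst {n : ℕ} (X : Set (Fin n → ℕ)) : Set (Fin n → ℕ) := ⋃ α ∈ X, Dpt α

/-- `E(X) = ⋃_{α ∈ X} E(α)`. -/
def Est {n : ℕ} (X : Set (Fin n → ℕ)) : Set (Fin n → ℕ) := ⋃ α ∈ X, Ept α

/-- `F(α) = D(E(α))`. -/
def Fpt {n : ℕ} (α : Fin n → ℕ) : Set (Fin n → ℕ) := Dst (Ept α)

/-- prefix sum -/
def Qp {n : ℕ} (v : Fin n → ℤ) (m : ℕ) : ℤ :=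
  ∑ j ∈ Finset.range m, if h : j < n then v ⟨j, h⟩ else 0

lemma Qp_zero {n : ℕ} (v : Fin n → ℤ) : Qp v 0 = 0 := by simp [Qp]

lemma Qp_succ {n : ℕ} (v : Fin n → ℤ) (m : ℕ) :
    Qp v (m + 1) = Qp v m + if h : m < n then v ⟨m, h⟩ else 0 := by
  simp [Qp, Finset.sum_range_succ]

lemma Qp_add {n : ℕ} (v w : Fin n → ℤ) (m : ℕ) :
    Qp (v + w) m = Qp v m + Qp w m := by
  simp only [Qp, ← Finset.sum_add_distrib]
  refine Finset.sum_congr rfl fun j _ => ?_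
  split <;> simp

lemma Qp_sub {n : ℕ} (v w : Fin n → ℤ) (m : ℕ) :
    Qp (v - w) m = Qp v m - Qp w m := by
  simp only [Qp, ← Finset.sum_sub_distrib]
  refine Finset.sum_congr rfl fun j _ => ?_
  split <;> simp

lemma Qp_single {n : ℕ} (i : Fin n) (c : ℤ) (m : ℕ) :
    Qp (Pi.single i c) m = if i.1 < m then c else 0 := by
  have : ∀ j ∈ Finset.range m,
      (if h : j < n then (Pi.single i c : Fin n → ℤ) ⟨j, h⟩ else 0)
        = if j = i.1 then c else 0 := by
    intro j _
    split
    · rename_i h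
      rw [Pi.single_apply]
      congr 1
      simp [Fin.ext_iff]
    · rename_i h
      have : ¬ (j = i.1) := by omega
      simp [this]
  rw [Qp, Finset.sum_congr rfl this, Finset.sum_ite_eq' (Finset.range m) i.1 (fun _ => c)]
  simp

lemma Qp_stable {n : ℕ} (v : Fin n → ℤ) {m : ℕ} (h : n ≤ m) : Qp v m = Qp v n := by
  rw [Qp, Qp]
  refine (Finset.sum_subset (Finset.range_mono h) ?_).symm
  intro j _ hj
  simp only [Finset.mem_range, not_lt] at hj
  simp [Nat.not_lt.2 hj, dif_neg]

lemma Qp_nonneg {n : ℕ} (v : Fin n → ℤ) (hv : ∀ i, 0 ≤ v i) (m : ℕ) : 0 ≤ Qp v m := by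
  refine Finset.sum_nonneg fun j _ => ?_
  split
  · exact hv _
  · exact le_refl 0

lemma Qp_mono {n : ℕ} (v : Fin n → ℤ) (hv : ∀ i, 0 ≤ v i) {m m' : ℕ} (h : m ≤ m') :
    Qp v m ≤ Qp v m' := by
  refine Finset.sum_le_sum_of_subset_of_nonneg (Finset.range_mono h) ?_
  intro j _ _
  split
  · exact hv _
  · exact le_refl 0

lemma Qp_univ {n : ℕ} (v : Fin n → ℤ) : Qp v n = ∑ i, v i := by
  rw [Qp]
  rw [← Fin.sum_univ_eq_sum_range (fun j => if h : j < n then v ⟨j, h⟩ else 0) n]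
  refine Finset.sum_congr rfl fun i _ => ?_
  simp [i.2]

lemma shuffles_Qp {n : ℕ} {v : Fin n → ℤ} (hv : v ∈ shuffles n) :
    (∀ m, 0 ≤ Qp v m) ∧ Qp v n = 0 := by
  refine AddSubmonoid.closure_induction ?_ ?_ ?_ hv
  · rintro x ⟨i, j, hij, rfl⟩
    constructor
    · intro m
      rw [Qp_sub, Qp_single, Qp_single]
      have : i.1 ≤ j.1 := hij
      split_ifs <;> omega
    · rw [Qp_sub, Qp_single, Qp_single, if_pos i.2, if_pos j.2]
      ring
  · constructor
    · intro m
      have : (0 : Fin n → ℤ) = 0 - 0 := by simp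
      rw [this, Qp_sub]
      simp
    · have : (0 : Fin n → ℤ) = 0 - 0 := by simp
      rw [this, Qp_sub]
      ring
  · rintro x y _ _ ⟨hx1, hx2⟩ ⟨hy1, hy2⟩
    constructor
    · intro m; rw [Qp_add]; exact add_nonneg (hx1 m) (hy1 m)
    · rw [Qp_add, hx2, hy2]; ring

lemma eq_zero_of_Qp {n : ℕ} {v : Fin n → ℤ} (h : ∀ m, m ≤ n → Qp v m = 0) : v = 0 := by
  funext i
  have h1 := h i.1 (le_of_lt i.2)
  have h2 := h (i.1 + 1) i.2
  have := Qp_succ v i.1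
  rw [dif_pos i.2] at this
  simp only [Fin.eta] at this
  simp only [h1, h2] at this
  simpa using this.symm

lemma mem_shuffles_of_Qp_aux {n : ℕ} (N : ℕ) :
    ∀ (v : Fin n → ℤ), (∀ m, 0 ≤ Qp v m) → Qp v n = 0 →
    (∑ m ∈ Finset.range n, Qp v m).toNat ≤ N → v ∈ shuffles n := by
  induction N with
  | zero =>
    intro v h1 h2 h3
    have hz : ∀ m ∈ Finset.range n, Qp v m = 0 := by
      have hsum : ∑ m ∈ Finset.range n, Qp v m = 0 := by
        have hnn : 0 ≤ ∑ m ∈ Finset.range n, Qp v m :=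
          Finset.sum_nonneg fun m _ => h1 m
        omega
      exact (Finset.sum_eq_zero_iff_of_nonneg fun m _ => h1 m).1 hsum
    have : v = 0 := by
      apply eq_zero_of_Qp
      intro m hm
      rcases Nat.lt_or_ge m n with h | h
      · exact hz m (Finset.mem_range.2 h)
      · rw [Qp_stable v h, h2]
    rw [this]
    exact AddSubmonoid.zero_mem _
  | succ N ih =>
    intro v h1 h2 h3
    by_cases hall : ∀ m ∈ Finset.range n, Qp v m = 0
    · have : v = 0 := by
        apply eq_zero_of_Qp
        intro m hm
        rcases Nat.lt_or_ge m n with h | h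
        · exact hall m (Finset.mem_range.2 h)
        · rw [Qp_stable v h, h2]
      rw [this]; exact AddSubmonoid.zero_mem _
    · push_neg at hall
      obtain ⟨m, hmr, hm0⟩ := hall
      have hmn : m < n := Finset.mem_range.1 hmr
      have hmpos : 0 < Qp v m := lt_of_le_of_ne (h1 m) (Ne.symm hm0)
      have hm1 : 1 ≤ m := by
        by_contra h
        have : m = 0 := by omega
        rw [this, Qp_zero] at hmpos
        omega
      set i : Fin n := ⟨m - 1, by omega⟩
      set j : Fin n := ⟨m, hmn⟩
      set σ : Fin n → ℤ := Pi.single i 1 - Pi.single j 1 with hσdef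
      have hσel : σ ∈ elementaryShuffles n := ⟨i, j, by simp only [i, j, Fin.mk_le_mk]; omega, rfl⟩
      have hσQ : ∀ m', Qp σ m' = if m' = m then 1 else 0 := by
        intro m'
        rw [hσdef, Qp_sub, Qp_single, Qp_single]
        simp only [i, j]
        split_ifs <;> omega
      set w : Fin n → ℤ := v - σ with hwdef
      have hwQ : ∀ m', Qp w m' = Qp v m' - (if m' = m then 1 else 0) := by
        intro m'; rw [hwdef, Qp_sub, hσQ]
      have hw1 : ∀ m', 0 ≤ Qp w m' := by
        intro m'
        rw [hwQ]
        by_cases h : m' = m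
        · subst h; simp; omega
        · simp [h]; exact h1 m'
      have hw2 : Qp w n = 0 := by
        rw [hwQ]
        have : ¬ (n = m) := by omega
        simp [this, h2]
      have hwsum : ∑ m' ∈ Finset.range n, Qp w m'
          = (∑ m' ∈ Finset.range n, Qp v m') - 1 := by
        simp only [hwQ]
        rw [Finset.sum_sub_distrib, Finset.sum_ite_eq' (Finset.range n) m (fun _ => (1:ℤ))]
        simp [hmr]
      have hw3 : (∑ m' ∈ Finset.range n, Qp w m').toNat ≤ N := by
        rw [hwsum]
        have hle : Qp v m ≤ ∑ m' ∈ Finset.range n, Qp v m' :=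
          Finset.single_le_sum (fun m' _ => h1 m') hmr
        omega
      have hw : w ∈ shuffles n := ih w hw1 hw2 hw3
      have : v = w + σ := by rw [hwdef]; ring
      rw [this]
      exact AddSubmonoid.add_mem _ hw (AddSubmonoid.subset_closure hσel)

lemma mem_shuffles_of_Qp {n : ℕ} {v : Fin n → ℤ} (h1 : ∀ m, 0 ≤ Qp v m)
    (h2 : Qp v n = 0) : v ∈ shuffles n :=
  mem_shuffles_of_Qp_aux (∑ m ∈ Finset.range n, Qp v m).toNat v h1 h2 le_rfl

lemma natToInt_nonneg {n : ℕ} (α : Fin n → ℕ) : ∀ i, 0 ≤ natToInt α i :=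
  fun i => Int.natCast_nonneg _

lemma natToInt_add {n : ℕ} (α β : Fin n → ℕ) :
    natToInt (α + β) = natToInt α + natToInt β := by
  funext i; simp [natToInt]


lemma min_step (a b c : ℤ) (h : a ≤ b) :
    min a c ≤ min b c ∧ min b c - min a c ≤ b - a := by
  rw [min_def, min_def]
  split_ifs <;> omega

/-- For every `α ∈ ℕⁿ`, `E(D(α)) ⊆ D(E(α))`; that is, if `β ∈ D(α)` and
`γ ∈ E(β)`, then there exists `δ ∈ E(α)` with `γ ∈ D(δ)`. -/
theorem statement7 {n : ℕ} (α : Fin n → ℕ) : Est (Dpt α) ⊆ Dst (Ept α) := by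
  intro γ hγ
  simp only [Est, Set.mem_iUnion, exists_prop] at hγ
  obtain ⟨β, ⟨ε, rfl⟩, s, hs, hG⟩ := hγ
  rw [natToInt_add] at hG
  set A := natToInt α with hA
  set G := natToInt γ with hGdef
  -- prefix-sum facts
  obtain ⟨hsQ, _⟩ := shuffles_Qp hs
  set T : ℤ := Qp A n with hT
  have hAT : ∀ m, Qp A m ≤ T := by
    intro m
    rcases le_or_gt n m with h | h
    · rw [Qp_stable A h]
    · exact Qp_mono A (natToInt_nonneg α) (le_of_lt h)
  have hGA : ∀ m, Qp A m ≤ Qp G m := by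
    intro m
    have : Qp G m = Qp A m + Qp (natToInt ε) m + Qp s m := by
      rw [hG]; rw [Qp_add, Qp_add]
    rw [this]
    have h1 := Qp_nonneg (natToInt ε) (natToInt_nonneg ε) m
    have h2 := hsQ m
    omega
  set f : ℕ → ℤ := fun m => min (Qp G m) T with hf
  have hfmono : ∀ m, f m ≤ f (m + 1) := by
    intro m
    have h := Qp_mono G (natToInt_nonneg γ) (Nat.le_add_right m 1)
    simp only [hf]
    exact (min_step _ _ _ h).1
  have hγQ : ∀ i : Fin n, Qp G (i.1 + 1) - Qp G i.1 = G i := by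
    intro i
    rw [Qp_succ, dif_pos i.2]
    simp
  set δ : Fin n → ℕ := fun i => (f (i.1 + 1) - f i.1).toNat with hδ
  have hδint : ∀ i : Fin n, (δ i : ℤ) = f (i.1 + 1) - f i.1 := by
    intro i
    simp only [hδ]
    rw [Int.toNat_of_nonneg]
    have := hfmono i.1
    omega
  have hδle : ∀ i : Fin n, (δ i : ℤ) ≤ G i := by
    intro i
    rw [hδint i, ← hγQ i]
    have h := Qp_mono G (natToInt_nonneg γ) (Nat.le_add_right i.1 1)
    simp only [hf]
    exact (min_step _ _ _ h).2
  have hQδ : ∀ m, m ≤ n → Qp (natToInt δ) m = f m := by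
    intro m hm
    have h0 : f 0 = 0 := by
      have h0T : (0:ℤ) ≤ T := by rw [hT]; exact Qp_nonneg A (natToInt_nonneg α) n
      simp only [hf, Qp_zero]
      exact min_eq_left h0T
    have : Qp (natToInt δ) m = ∑ j ∈ Finset.range m, (f (j + 1) - f j) := by
      rw [Qp]
      refine Finset.sum_congr rfl fun j hj => ?_
      have hjn : j < n := lt_of_lt_of_le (Finset.mem_range.1 hj) hm
      rw [dif_pos hjn]
      exact hδint ⟨j, hjn⟩
    rw [this, Finset.sum_range_sub f m, h0, sub_zero]
  -- δ ∈ Ept α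
  have hδE : δ ∈ Ept α := by
    refine ⟨natToInt δ - A, ?_, by ring⟩
    apply mem_shuffles_of_Qp
    · intro m
      rw [Qp_sub]
      rcases le_or_gt m n with h | h
      · rw [hQδ m h]
        have h3 : Qp A m ≤ f m := by
          simp only [hf]
          exact le_min (hGA m) (hAT m)
        omega
      · rw [Qp_stable (natToInt δ) (le_of_lt h), Qp_stable A (le_of_lt h), hQδ n le_rfl]
        have h3 : f n = T := by
          simp only [hf]
          exact min_eq_right (hGA n)
        omega
    · rw [Qp_sub, hQδ n le_rfl]
      have h3 : f n = T := by
        simp only [hf]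
        exact min_eq_right (hGA n)
      omega
  -- γ ∈ Dpt δ
  have hδγ : ∀ i, δ i ≤ γ i := by
    intro i
    have := hδle i
    simp only [hGdef, natToInt] at this
    omega
  have hγD : γ ∈ Dpt δ := by
    refine ⟨fun i => γ i - δ i, ?_⟩
    funext i
    have := hδγ i
    simp only [Pi.add_apply]
    omega
  simp only [Dst, Set.mem_iUnion, exists_prop]
  exact ⟨δ, hδE, hγD⟩
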